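/- Consider the energy-efficient data center birth-death chain on states {(0,0),...,(n,0),(n,1),...,(n,m)} with arrival rate λ>0, where the death rate at state (i,0) is iμ_1 and at state (n,j) is ν(d_{n,j}) = nμ_1 + min(d_{n,j}, j)μ_2, for a policy d = (d_{n,1},...,d_{n,m}) with d_{n,j} ∈ {0,1,...,m}. If two policies d^1 ≥ d^2 componentwise (i.e., d^1_{n,j} ≥ d^2_{n,j} for all j), then the stationary probabilities satisfy π^{(d^1)}(i,0) ≥ π^{(d^2)}(i,0) for all i = 0,1,...,n. -/

import Mathlib

open Finset

/-- if policies `d1 ≥ d2` componentwise, then the stationary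
probabilities of the data-center chain satisfy `π^{(d1)}(i,0) ≥ π^{(d2)}(i,0)`
for all `i = 0,...,n`, where `π^{(d)}(i,0) = ξ_{i,0}/b^{(d)}`. -/
theorem stmt1 (n m : ℕ) (hn : 1 ≤ n) (hm : 1 ≤ m)
    (lam μ1 μ2 : ℝ) (hlam : 0 < lam) (hμ1 : 0 < μ1) (hμ2 : 0 < μ2)
    (d1 d2 : ℕ → ℕ) (hd1 : ∀ j, d1 j ≤ m) (hd2 : ∀ j, d2 j ≤ m)
    (hdom : ∀ j, d2 j ≤ d1 j)
    (xi0 : ℕ → ℝ) (hxi0 : ∀ i, xi0 i = lam ^ i / ((i.factorial : ℝ) * μ1 ^ i))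
    (xin : (ℕ → ℕ) → ℕ → ℝ)
    (hxin : ∀ d j, xin d j = lam ^ n / ((n.factorial : ℝ) * μ1 ^ n) *
        (lam ^ j / ∏ i ∈ Finset.Icc 1 j, ((n : ℝ) * μ1 + (min (d i) i : ℝ) * μ2)))
    (b : (ℕ → ℕ) → ℝ)
    (hb : ∀ d, b d = ∑ i ∈ Finset.range (n + 1), xi0 i + ∑ j ∈ Finset.Icc 1 m, xin d j)
    (π : (ℕ → ℕ) → ℕ → ℝ)
    (hπ : ∀ d i, π d i = xi0 i / b d) :
    ∀ i ≤ n, π d2 i ≤ π d1 i := by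
  have hterm : ∀ (d : ℕ → ℕ) (i : ℕ), 0 < (n : ℝ) * μ1 + (min (d i) i : ℝ) * μ2 := by
    intro d i
    have h1 : 0 < (n : ℝ) * μ1 := by positivity
    have h2 : 0 ≤ (min (d i) i : ℝ) * μ2 := by positivity
    linarith
  have hprodpos : ∀ (d : ℕ → ℕ) (j : ℕ),
      0 < ∏ i ∈ Finset.Icc 1 j, ((n : ℝ) * μ1 + (min (d i) i : ℝ) * μ2) :=
    fun d j => Finset.prod_pos fun i _ => hterm d i
  have hxipos : ∀ i, 0 < xi0 i := by
    intro i; rw [hxi0]; positivity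
  have hxinpos : ∀ d j, 0 < xin d j := by
    intro d j; rw [hxin]
    have := hprodpos d j
    positivity
  have hbpos : ∀ d, 0 < b d := by
    intro d; rw [hb]
    have h1 : 0 < ∑ i ∈ Finset.range (n + 1), xi0 i :=
      Finset.sum_pos (fun i _ => hxipos i) ⟨0, Finset.mem_range.mpr (Nat.succ_pos n)⟩
    have h2 : 0 ≤ ∑ j ∈ Finset.Icc 1 m, xin d j :=
      Finset.sum_nonneg fun j _ => (hxinpos d j).le
    linarith
  have hble : b d1 ≤ b d2 := by
    rw [hb, hb]
    have : ∀ j ∈ Finset.Icc 1 m, xin d1 j ≤ xin d2 j := by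
      intro j _
      rw [hxin, hxin]
      have hpref : 0 ≤ lam ^ n / ((n.factorial : ℝ) * μ1 ^ n) := by positivity
      refine mul_le_mul_of_nonneg_left ?_ hpref
      refine div_le_div_of_nonneg_left (by positivity) (hprodpos d2 j) ?_
      refine Finset.prod_le_prod (fun i _ => (hterm d2 i).le) ?_
      intro i _
      have : (min (d2 i) i : ℝ) ≤ (min (d1 i) i : ℝ) := by
        exact_mod_cast min_le_min (hdom i) le_rfl
      nlinarith [hμ2.le]
    linarith [Finset.sum_le_sum this]
  intro i _
  rw [hπ, hπ]
  exact div_le_div_of_nonneg_left (hxipos i).le (hbpos d1) hble
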